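/- Let V be the ℚ(q)-space with basis {v_j : j ∈ J}, J = {±1,…,±n}, and W the A^{(2)†}_{2n−1} wedge-relation subspace. In the quotient V² = (V⊗V)/W, for each i with 1 ≤ i < n one has v_{−i} ∧ v_i = −q² v_i ∧ v_{−i} − q(v_{−i−1} ∧ v_{i+1} + v_{i+1} ∧ v_{−i−1}), and consequently v_1 ∧ v_{−1} − q v_2 ∧ v_{−2} + ⋯ + (−q)^{n−1} v_n ∧ v_{−n} = −q^{2n−2}·(v_{−1} ∧ v_1 − q^{−1} v_{−2} ∧ v_2 + ⋯ + (−q)^{−(n−1)} v_{−n} ∧ v_n). -/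

import Mathlib

open TensorProduct Finset

noncomputable section

abbrev K : Type := RatFunc ℚ
abbrev V : Type := ℤ →₀ K

/-- `q` in the field of rational functions `ℚ(q)`. -/
def q : K := RatFunc.X

/-- basis vectors `v_j` -/
def v (j : ℤ) : V := Finsupp.single j 1

/-- position of `j` in the order `1 ≺ 2 ≺ ⋯ ≺ n ≺ −n ≺ ⋯ ≺ −1`. -/
def ord (n j : ℤ) : ℤ := if 0 < j then j else 2 * n + 1 + j

/-- the common wedge relations -/
def commonRels (n : ℤ) : Set (V ⊗[K] V) :=
  {x | ∃ i : ℤ, 1 ≤ |i| ∧ |i| ≤ n ∧ x = v i ⊗ₜ[K] v i} ∪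
  {x | ∃ i j : ℤ, 1 ≤ |i| ∧ |i| ≤ n ∧ 1 ≤ |j| ∧ |j| ≤ n ∧
        ord n j < ord n i ∧ i ≠ j ∧ i ≠ -j ∧
        x = v i ⊗ₜ[K] v j + q • (v j ⊗ₜ[K] v i)} ∪
  {x | ∃ i : ℤ, 1 ≤ i ∧ i < n ∧
        x = v (-i) ⊗ₜ[K] v i + q ^ 2 • (v i ⊗ₜ[K] v (-i)) +
            q • (v (i+1) ⊗ₜ[K] v (-(i+1)) + v (-(i+1)) ⊗ₜ[K] v (i+1))}

/-- `W₁`: common relations plus `v₁ ⊗ v₋₁ + v₋₁ ⊗ v₁` -/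
def W₁ (n : ℤ) : Submodule K (V ⊗[K] V) :=
  Submodule.span K (commonRels n ∪ {v 1 ⊗ₜ[K] v (-1) + v (-1) ⊗ₜ[K] v 1})

/-- `W₂`: common relations plus `v₋ₙ ⊗ vₙ + q² vₙ ⊗ v₋ₙ` -/
def W₂ (n : ℤ) : Submodule K (V ⊗[K] V) :=
  Submodule.span K (commonRels n ∪ {v (-n) ⊗ₜ[K] v n + q ^ 2 • (v n ⊗ₜ[K] v (-n))})

/-! ### Auxiliary material -/

section AbstractLemmas
variable {R M : Type} [CommRing R] [AddCommGroup M] [Module R M]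

lemma abs_solve (t : R) (b₁ a₁ a₂ b₂ : M)
    (h : b₁ + t^2 • a₁ + t • (a₂ + b₂) = 0) :
    b₁ = -(t^2 • a₁) - t • (b₂ + a₂) := by
  linear_combination (norm := module) h

lemma abs_base (t Q : R) (a₁ b₁ a₂ b₂ : M)
    (hb0 : a₁ + b₁ = 0)
    (hb : b₁ = -(t^2 • a₁) - t • (b₂ + a₂)) :
    (t^2 - 1) • ((1:R) • a₁ + Q • b₁) = (-(t - Q*t)) • (a₂ + b₂) := by
  linear_combination (norm := module) (Q*t^2 - 1) • hb0 + (1 - Q) • hb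

lemma abs_step (t ε P Q : R) (S a₁ b₁ a₂ b₂ : M)
    (hS : (t^2-1) • S = (ε * (P - Q*t^2)) • (a₁ + b₁))
    (hb : b₁ = -(t^2 • a₁) - t • (b₂ + a₂)) :
    (t^2-1) • (S + ((ε*P) • a₁ + (ε*Q) • b₁)) = ((-ε) * (P*t - Q*t)) • (a₂ + b₂) := by
  linear_combination (norm := module) hS + (ε*(P-Q)) • hb

lemma abs_final (t P ε : R) (S aN bN : M)
    (hS : (t^2-1) • S = (ε * (P - P*t^2)) • (aN + bN)) :
    (t^2-1) • (S + ((ε*P) • aN + (ε*P) • bN)) = 0 := by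
  linear_combination (norm := module) hS

end AbstractLemmas

lemma q_ne : (q:K) ≠ 0 := RatFunc.X_ne_zero

lemma q2_sub_one_ne : (q^2 - 1 : K) ≠ 0 := by
  have h : (q^2 - 1 : K) = algebraMap (Polynomial ℚ) K (Polynomial.X^2 - 1) := by
    rw [map_sub, map_pow, map_one, RatFunc.algebraMap_X, q]
  rw [h]
  apply RatFunc.algebraMap_ne_zero
  intro hz
  have := congrArg (fun p => Polynomial.coeff p 0) hz
  simp [Polynomial.coeff_X_pow] at this

def aa (n i : ℤ) := Submodule.Quotient.mk (p := W₁ n) (v i ⊗ₜ[K] v (-i))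
def bb (n i : ℤ) := Submodule.Quotient.mk (p := W₁ n) (v (-i) ⊗ₜ[K] v i)

lemma rel0 (n : ℤ) : aa n 1 + bb n 1 = 0 := by
  rw [aa, bb, ← Submodule.Quotient.mk_add, Submodule.Quotient.mk_eq_zero]
  exact Submodule.subset_span (Or.inr rfl)

lemma relb (n i : ℤ) (h1 : 1 ≤ i) (h2 : i < n) :
    bb n i = -(q^2 • aa n i) - q • (bb n (i+1) + aa n (i+1)) := by
  have hmem : (v (-i) ⊗ₜ[K] v i + q ^ 2 • (v i ⊗ₜ[K] v (-i)) +
      q • (v (i+1) ⊗ₜ[K] v (-(i+1)) + v (-(i+1)) ⊗ₜ[K] v (i+1))) ∈ W₁ n :=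
    Submodule.subset_span (Or.inl (Or.inr ⟨i, h1, h2, rfl⟩))
  have h0 : bb n i + q^2 • aa n i + q • (aa n (i+1) + bb n (i+1)) = 0 := by
    simp only [aa, bb, ← Submodule.Quotient.mk_smul, ← Submodule.Quotient.mk_add]
    rw [Submodule.Quotient.mk_eq_zero]
    exact hmem
  exact abs_solve q _ _ _ _ h0

lemma claim (n : ℕ) (hn : 2 ≤ n) : ∀ k : ℕ, 1 ≤ k → k ≤ n - 1 →
    (q^2 - 1) • (∑ j ∈ range k,
        (((-1:K)^j * q^j) • aa n ((j:ℤ)+1) + ((-1:K)^j * q^(2*n-2-j)) • bb n ((j:ℤ)+1)))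
      = ((-1:K)^k * (q^k - q^(2*n-k))) • (aa n ((k:ℤ)+1) + bb n ((k:ℤ)+1)) := by
  intro k
  induction k with
  | zero => omega
  | succ k ih =>
    intro _ hk2
    rcases Nat.eq_zero_or_pos k with rfl | hk
    · -- base case k+1 = 1
      rw [Finset.sum_range_one]
      simp only [Nat.cast_zero, zero_add, Nat.cast_one, Nat.sub_zero, pow_zero, one_mul, pow_one]
      have hb := relb n 1 le_rfl (by exact_mod_cast hn)
      have hb0 := rel0 n
      rw [show ((-1:K) * (q - q^(2*n-1))) = -(q - q^(2*n-2)*q) from by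
        rw [show 2*n-1 = 2*n-2+1 from by omega]; ring]
      have := abs_base q (q^(2*n-2)) (aa n 1) (bb n 1) (aa n (1+1)) (bb n (1+1)) hb0 hb
      simpa only [one_smul] using this
    · have ih' := ih hk (by omega)
      rw [show 2*n-k = 2*n-2-k+2 from by omega] at ih'
      rw [show ((-1:K)^k * (q^k - q^(2*n-2-k+2))) = ((-1:K)^k * (q^k - q^(2*n-2-k)*q^2)) from by
        ring] at ih'
      have hb := relb n ((k:ℤ)+1) (by omega) (by omega)
      rw [Finset.sum_range_succ]
      simp only [Nat.cast_add, Nat.cast_one]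
      rw [show ((-1:K)^(k+1) * (q^(k+1) - q^(2*n-(k+1)))) =
          ((-((-1:K)^k)) * ((q^k)*q - (q^(2*n-2-k))*q)) from by
        rw [show 2*n-(k+1) = 2*n-2-k+1 from by omega]; ring]
      exact abs_step q ((-1)^k) (q^k) (q^(2*n-2-k)) _ _ _ _ _ ih' hb

lemma Tn0 (n : ℕ) (hn : 2 ≤ n) :
    ∑ j ∈ range n,
        (((-1:K)^j * q^j) • aa n ((j:ℤ)+1) + ((-1:K)^j * q^(2*n-2-j)) • bb n ((j:ℤ)+1)) = 0 := by
  obtain ⟨m, rfl⟩ : ∃ m, n = m + 2 := ⟨n - 2, by omega⟩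
  have hc := claim (m+2) hn (m+1) (by omega) (by omega)
  rw [show 2*(m+2)-(m+1) = (m+1)+2 from by omega] at hc
  rw [show ((-1:K)^(m+1) * (q^(m+1) - q^((m+1)+2))) =
      ((-1:K)^(m+1) * (q^(m+1) - q^(m+1)*q^2)) from by ring] at hc
  have hz := abs_final q (q^(m+1)) ((-1:K)^(m+1)) _ _ _ hc
  have hsum : ∑ j ∈ range (m+2),
      (((-1:K)^j * q^j) • aa (m+2) ((j:ℤ)+1) + ((-1:K)^j * q^(2*(m+2)-2-j)) • bb (m+2) ((j:ℤ)+1))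
      = (∑ j ∈ range (m+1),
        (((-1:K)^j * q^j) • aa (m+2) ((j:ℤ)+1) + ((-1:K)^j * q^(2*(m+2)-2-j)) • bb (m+2) ((j:ℤ)+1)))
        + ((((-1:K)^(m+1)*q^(m+1)) • aa (m+2) (((m+1:ℕ):ℤ)+1))
           + (((-1:K)^(m+1)*q^(m+1)) • bb (m+2) (((m+1:ℕ):ℤ)+1))) := by
    rw [Finset.sum_range_succ]
    congr 2
    rw [show 2*(m+2)-2-(m+1) = m+1 from by omega]
  push_cast at hz hsum ⊢
  rw [show ((m:ℤ)+2) = (m:ℤ)+1+1 from by ring] at hsum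
  rw [hsum]
  exact (inv_smul_smul₀ q2_sub_one_ne _).symm.trans (by rw [hz, smul_zero])

theorem stmt16 (n : ℕ) (hn : 2 ≤ n) :
    (∀ i : ℤ, 1 ≤ i → i < n →
      Submodule.Quotient.mk (p := W₁ n) (v (-i) ⊗ₜ[K] v i)
        = -(q ^ 2) • Submodule.Quotient.mk (p := W₁ n) (v i ⊗ₜ[K] v (-i))
          - q • (Submodule.Quotient.mk (p := W₁ n) (v (-(i+1)) ⊗ₜ[K] v (i+1))
                 + Submodule.Quotient.mk (p := W₁ n) (v (i+1) ⊗ₜ[K] v (-(i+1))))) ∧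
    (∑ i ∈ Icc (1:ℤ) (n:ℤ), (-q) ^ (i-1) •
        Submodule.Quotient.mk (p := W₁ n) (v i ⊗ₜ[K] v (-i))
      = -(q ^ (2*(n:ℤ)-2)) •
        ∑ i ∈ Icc (1:ℤ) (n:ℤ), (-q) ^ (-(i-1)) •
          Submodule.Quotient.mk (p := W₁ n) (v (-i) ⊗ₜ[K] v i)) := by
  constructor
  · intro i h1 h2
    have h := relb n i h1 h2
    simp only [aa, bb] at h
    rw [h, neg_smul]
  · have T0 := Tn0 n hn
    simp only [aa, bb] at T0
    rw [neg_smul, eq_neg_iff_add_eq_zero, Finset.smul_sum, ← Finset.sum_add_distrib]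
    have hIcc : Icc (1:ℤ) (n:ℤ)
        = Finset.map ⟨fun j : ℕ => (j:ℤ)+1, (have hinj : Function.Injective (fun j : ℕ => (j:ℤ)+1) := (fun a b h => by simp only at h; omega); hinj)⟩ (range n) := by
      ext x
      simp only [Finset.mem_Icc, Finset.mem_map, Finset.mem_range,
        Function.Embedding.coeFn_mk]
      constructor
      · rintro ⟨hx1, hx2⟩
        exact ⟨(x-1).toNat, by omega, by omega⟩
      · rintro ⟨j, hj, rfl⟩
        omega
    rw [hIcc, Finset.sum_map]
    refine Eq.trans (Finset.sum_congr rfl ?_) T0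
    intro j hj
    have hj' : j < n := Finset.mem_range.mp hj
    simp only [Function.Embedding.coeFn_mk]
    rw [smul_smul]
    have e : (j:ℤ)+1-1 = (j:ℤ) := by ring
    congr 1
    · congr 1
      rw [e, zpow_natCast, neg_pow]
    · congr 1
      rw [e, zpow_neg, zpow_natCast, neg_pow, mul_inv,
        show (((-1:K)^j)⁻¹) = (-1:K)^j from by rw [← inv_pow, inv_neg, inv_one],
        show (2*(n:ℤ)-2) = ((2*n-2-j:ℕ):ℤ) + (j:ℤ) from by omega,
        zpow_add₀ q_ne]
      simp only [zpow_natCast]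
      have hq : (q:K)^j ≠ 0 := pow_ne_zero _ q_ne
      field_simp
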